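/- Let a, b, c, d be complex numbers with |a| = |b| = |c| = |d| = 1, a + c ≠ 0 and b + d ≠ 0. Suppose z ∈ ℂ satisfies |z − 2ac/(a+c)| = |a − 2ac/(a+c)| and |z − 2bd/(b+d)| = |b − 2bd/(b+d)| (i.e., z lies both on the circle through a and c orthogonal to the unit circle and on the circle through b and d orthogonal to the unit circle). Then z satisfies the quadratic equation (a − b + c − d)z² − 2(ac − bd)z + (ac(b+d) − bd(a+c)) = 0. -/

import Mathlib

open Complex ComplexConjugate

lemma circle_eq (a c z : ℂ) (ha : ‖a‖ = 1) (hc : ‖c‖ = 1)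
    (hac : a + c ≠ 0)
    (hz : ‖z - 2 * a * c / (a + c)‖ = ‖a - 2 * a * c / (a + c)‖) :
    (z * conj z + 1) * (a + c) = 2 * z + 2 * a * c * conj z := by
  have ha0 : a ≠ 0 := fun h => by simp [h] at ha
  have hc0 : c ≠ 0 := fun h => by simp [h] at hc
  have hA : conj a = a⁻¹ := by
    rw [inv_eq_one_div, eq_div_iff ha0, mul_comm, Complex.mul_conj]
    norm_cast
    simp [Complex.normSq_eq_norm_sq, ha]
  have hC : conj c = c⁻¹ := by
    rw [inv_eq_one_div, eq_div_iff hc0, mul_comm, Complex.mul_conj]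
    norm_cast
    simp [Complex.normSq_eq_norm_sq, hc]
  have h1 : (z - 2 * a * c / (a + c)) * conj (z - 2 * a * c / (a + c))
      = (a - 2 * a * c / (a + c)) * conj (a - 2 * a * c / (a + c)) := by
    rw [Complex.mul_conj, Complex.mul_conj]
    norm_cast
    simp [Complex.normSq_eq_norm_sq, hz]
  simp only [map_sub, map_div₀, map_mul, map_add, map_ofNat, hA, hC] at h1
  have hca : c + a ≠ 0 := by rwa [add_comm]
  field_simp [hac, hca] at h1
  have key : a * (a+c)^3 * ((z * conj z + 1) * (a + c)) = a * (a+c)^3 * (2 * z + 2 * a * c * conj z) := by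
    linear_combination a * (a + c) ^ 2 * h1
  exact mul_left_cancel₀ (mul_ne_zero ha0 (pow_ne_zero 3 hac)) key

/-- If `z` lies on both the circle through `a, c` orthogonal to the unit circle and
the circle through `b, d` orthogonal to the unit circle (for `a, b, c, d` on the unit
circle), then `z` satisfies `(a − b + c − d)z² − 2(ac − bd)z + (ac(b+d) − bd(a+c)) = 0`. -/
theorem intersection_satisfies_quadratic (a b c d z : ℂ)
    (ha : ‖a‖ = 1) (hb : ‖b‖ = 1)
    (hc : ‖c‖ = 1) (hd : ‖d‖ = 1)
    (hac : a + c ≠ 0) (hbd : b + d ≠ 0)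
    (hz1 : ‖z - 2 * a * c / (a + c)‖ = ‖a - 2 * a * c / (a + c)‖)
    (hz2 : ‖z - 2 * b * d / (b + d)‖ = ‖b - 2 * b * d / (b + d)‖) :
    (a - b + c - d) * z ^ 2 - 2 * (a * c - b * d) * z +
      (a * c * (b + d) - b * d * (a + c)) = 0 := by
  have e1 := circle_eq a c z ha hc hac hz1
  have e2 := circle_eq b d z hb hd hbd hz2
  have hw : z * conj z + 1 ≠ 0 := by
    rw [Complex.mul_conj]
    have h0 : (0:ℝ) < Complex.normSq z + 1 := by linarith [Complex.normSq_nonneg z]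
    exact_mod_cast ne_of_gt h0
  have key : (z * conj z + 1) * ((a - b + c - d) * z ^ 2 - 2 * (a * c - b * d) * z +
      (a * c * (b + d) - b * d * (a + c))) = (z * conj z + 1) * 0 := by
    linear_combination (z ^ 2 - b * d) * e1 + (a * c - z ^ 2) * e2
  exact mul_left_cancel₀ hw key
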